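/- Random-partition compression bound: let w be a word over an alphabet Σ with no two equal adjacent letters (|w| ≥ 2). Partition Σ randomly into (Σ₁, Σ₂) with each letter independently assigned to Σ₁ or Σ₂ with probability 1/2. Divide w into consecutive segments of 3 letters (ignoring a final partial segment). Then for each 3-letter segment abc, the probability that ab ∈ Σ₁Σ₂ or bc ∈ Σ₁Σ₂ is at least 1/2; hence the expected number of positions i with w_i w_{i+1} ∈ Σ₁Σ₂ is at least ⌊|w|/3⌋/2, and consequently there exists a partition (Σ₁, Σ₂) for which at least ⌊|w|/6⌋ disjoint factors of w lie in Σ₁Σ₂. -/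

import Mathlib

open Finset

private lemma fiber_card {A : Type*} [Fintype A] [DecidableEq A] (a b : A) (h : a ≠ b)
    (x y : Bool) :
    (univ.filter (fun f : A → Bool => f a = x ∧ f b = y)).card
    = (univ.filter (fun f : A → Bool => f a = true ∧ f b = false)).card := by
  apply Finset.card_bij
    (fun f _ => fun z => if z = a then true else if z = b then false else f z)
  · intro f hf
    simp only [mem_filter, mem_univ, true_and]
    constructor
    · simp
    · simp [h.symm]
  · intro f₁ h₁ f₂ h₂ heq
    simp only [mem_filter, mem_univ, true_and] at h₁ h₂
    funext z
    by_cases hza : z = a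
    · subst hza; rw [h₁.1, h₂.1]
    · by_cases hzb : z = b
      · subst hzb; rw [h₁.2, h₂.2]
      · have := congrFun heq z
        simpa [hza, hzb] using this
  · intro g hg
    simp only [mem_filter, mem_univ, true_and] at hg
    refine ⟨fun z => if z = a then x else if z = b then y else g z, ?_, ?_⟩
    · simp [h.symm]
    · funext z
      by_cases hza : z = a
      · subst hza; simp [hg.1]
      · by_cases hzb : z = b
        · subst hzb; simp [h.symm, hg.2]
        · simp [hza, hzb]

private lemma quarter {A : Type*} [Fintype A] [DecidableEq A] (a b : A) (h : a ≠ b) :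
    Fintype.card (A → Bool)
    = 4 * (univ.filter (fun f : A → Bool => f a = true ∧ f b = false)).card := by
  have key := Finset.card_eq_sum_card_fiberwise
    (f := fun f : A → Bool => (f a, f b)) (s := (univ : Finset (A → Bool)))
    (t := (univ : Finset (Bool × Bool))) (fun x _ => mem_univ _)
  have hfib : ∀ p : Bool × Bool,
      (univ.filter (fun f : A → Bool => (f a, f b) = p)).card
      = (univ.filter (fun f : A → Bool => f a = true ∧ f b = false)).card := by
    intro p
    rw [← fiber_card a b h p.1 p.2]
    congr 1
    ext f
    simp [Prod.ext_iff]
  rw [show Fintype.card (A → Bool) = (univ : Finset (A → Bool)).card from rfl, key,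
    Finset.sum_congr rfl (fun p _ => hfib p), Finset.sum_const]
  simp [Finset.card_univ]

private lemma sum_countP {A : Type*} [Fintype A] [DecidableEq A]
    (l : List (A × A)) (hl : ∀ p ∈ l, p.1 ≠ p.2) :
    4 * ∑ f : A → Bool, l.countP (fun p => f p.1 && !f p.2)
    = l.length * Fintype.card (A → Bool) := by
  induction l with
  | nil => simp
  | cons p l ih =>
    have hp : p.1 ≠ p.2 := hl p List.mem_cons_self
    have ih' := ih (fun q hq => hl q (List.mem_cons_of_mem _ hq))
    simp only [List.countP_cons, List.length_cons]
    rw [Finset.sum_add_distrib]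
    have hsum : (∑ f : A → Bool, if (f p.1 && !f p.2) = true then 1 else 0)
        = (univ.filter (fun f : A → Bool => f p.1 = true ∧ f p.2 = false)).card := by
      rw [Finset.card_filter]
      refine Finset.sum_congr rfl (fun f _ => ?_)
      simp [Bool.and_eq_true, Bool.not_eq_true']
    rw [hsum, mul_add, ih', add_mul, one_mul, quarter p.1 p.2 hp]

private lemma zip_ne {A : Type*} (w : List A) (h : w.Chain' (· ≠ ·)) :
    ∀ p ∈ w.zip w.tail, p.1 ≠ p.2 := by
  induction w with
  | nil => simp
  | cons a t ih =>
    cases t with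
    | nil => simp
    | cons b t' =>
      simp only [List.Chain', List.isChain_cons_cons] at h
      intro p hp
      simp only [List.tail_cons, List.zip_cons_cons, List.mem_cons] at hp
      rcases hp with rfl | hp
      · exact h.1
      · exact ih h.2 p (by simpa using hp)

/-- Random-partition compression bound (partitions Σ = Σ₁ ⊎ Σ₂ encoded as f : A → Bool,
with f x = true meaning x ∈ Σ₁; a cross position of w is an adjacent pair in Σ₁Σ₂).
For w with no two equal adjacent letters:
(1) for any 3-letter segment abc (a ≠ b, b ≠ c), at least half of all partitions
compress something in it;
(2) the expected number of cross positions is at least ⌊|w|/3⌋ / 2;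
(3) hence some partition has at least ⌊|w|/6⌋ (pairwise disjoint) cross factors. -/
theorem stmt18 {A : Type*} [Fintype A] [DecidableEq A] (w : List A)
    (hw : 2 ≤ w.length) (hadj : w.Chain' (· ≠ ·)) :
    (∀ a b c : A, a ≠ b → b ≠ c →
      Fintype.card (A → Bool) ≤
        2 * (Finset.univ.filter (fun f : A → Bool =>
          (f a = true ∧ f b = false) ∨ (f b = true ∧ f c = false))).card) ∧
    (Fintype.card (A → Bool) * (w.length / 3) ≤
      2 * ∑ f : A → Bool, (w.zip w.tail).countP (fun p => f p.1 && !f p.2)) ∧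
    (∃ f : A → Bool, w.length / 6 ≤ (w.zip w.tail).countP (fun p => f p.1 && !f p.2)) := by
  have h2k : 2 * (w.length / 3) ≤ w.length - 1 := by omega
  have h4 : 4 * (w.length / 6) ≤ w.length - 1 := by omega
  have hlen : (w.zip w.tail).length = w.length - 1 := by
    rw [List.length_zip, List.length_tail]; omega
  have hkey := sum_countP (w.zip w.tail) (zip_ne w hadj)
  rw [hlen] at hkey
  refine ⟨?_, ?_, ?_⟩
  · intro a b c hab hbc
    have h1 := quarter a b hab
    have h2 := quarter b c hbc
    rw [Finset.filter_or, Finset.card_union_of_disjoint]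
    · linarith [h1, h2]
    · simp only [Finset.disjoint_left, mem_filter, mem_univ, true_and]
      rintro f ⟨_, hb⟩ ⟨hb', _⟩
      rw [hb] at hb'
      exact absurd hb' (by simp)
  · have h' : 2 * (w.length / 3) * Fintype.card (A → Bool)
        ≤ (w.length - 1) * Fintype.card (A → Bool) :=
      Nat.mul_le_mul_right _ h2k
    rw [← hkey] at h'
    linarith [h']
  · have h1 : 4 * (Fintype.card (A → Bool) * (w.length / 6))
        ≤ 4 * ∑ f : A → Bool, (w.zip w.tail).countP (fun p => f p.1 && !f p.2) := by
      calc 4 * (Fintype.card (A → Bool) * (w.length / 6))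
          = Fintype.card (A → Bool) * (4 * (w.length / 6)) := by ring
        _ ≤ Fintype.card (A → Bool) * (w.length - 1) := Nat.mul_le_mul_left _ h4
        _ = 4 * ∑ f : A → Bool, (w.zip w.tail).countP (fun p => f p.1 && !f p.2) := by
            rw [hkey]; ring
    have hle : ∑ _f : A → Bool, (w.length / 6)
        ≤ ∑ f : A → Bool, (w.zip w.tail).countP (fun p => f p.1 && !f p.2) := by
      rw [Finset.sum_const, smul_eq_mul, Finset.card_univ]
      linarith [h1]
    obtain ⟨f, _, hf⟩ := Finset.exists_le_of_sum_le Finset.univ_nonempty hle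
    exact ⟨f, hf⟩
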